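/- Let A = D + UV^* ∈ ℂ^{n×n} with D a real diagonal matrix and U, V ∈ ℂ^{n×k}, and assume A_{i1} ≠ 0 for some i ≥ 3. Let G_2, …, G_{n−1} be Givens rotations (G_i acting on rows i and i+1) such that Q_1 = G_2 G_3 ⋯ G_{n−1} satisfies Q_1 A e_1 = α e_1 + β e_2 for some α, β ∈ ℂ. Then the trailing principal submatrix Â_1 = (Q_1 A Q_1^*)[2:n, 2:n] of size n−1 is lower-quasiseparable of rank k: rank(Â_1[i+1:n−1, 1:i]) ≤ k for every i = 1,…,n−2. -/

import Mathlib

open Matrix BigOperators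

/-- `A` is lower-quasiseparable of rank `k`:
`rank (A[i+1:m, 1:i]) ≤ k` for every `i = 1, …, m-1` (MATLAB notation). -/
noncomputable def lowQS {m : ℕ} (k : ℕ) (A : Matrix (Fin m) (Fin m) ℂ) : Prop :=
  ∀ i : ℕ, ∀ _hi : 0 < i, ∀ _him : i < m,
    (Matrix.of fun (p : Fin (m - i)) (q : Fin i) =>
      A ⟨i + p.1, by have := p.2; omega⟩ ⟨q.1, by have := q.2; omega⟩).rank ≤ k

/-- `G` is the Givens rotation acting on (0-indexed) rows `i` and `i+1` with
parameters `c ∈ ℝ`, `s ∈ ℂ`, `c² + |s|² = 1`. -/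
def IsGivensAt {n : ℕ} (i : ℕ) (c : ℝ) (s : ℂ) (G : Matrix (Fin n) (Fin n) ℂ) : Prop :=
  i + 1 < n ∧ c ^ 2 + ‖s‖ ^ 2 = 1 ∧
  ∀ p q : Fin n,
    G p q =
      if (p : ℕ) = i ∧ (q : ℕ) = i then (c : ℂ)
      else if (p : ℕ) = i ∧ (q : ℕ) = i + 1 then s
      else if (p : ℕ) = i + 1 ∧ (q : ℕ) = i then -((starRingEnd ℂ) s)
      else if (p : ℕ) = i + 1 ∧ (q : ℕ) = i + 1 then (c : ℂ)
      else if p = q then 1 else 0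

noncomputable def auxA (c : ℕ → ℝ) (p : ℕ) : ℂ := if p = 1 then 1 else (c (p-1) : ℂ)
noncomputable def auxB (c : ℕ → ℝ) (m q : ℕ) : ℂ := if q ≤ m then (c q : ℂ) else 1
noncomputable def auxS (s : ℕ → ℂ) (p q : ℕ) : ℂ := ∏ l ∈ Finset.Ico p q, s l

lemma givens_prod_entry (n : ℕ) (hn : 3 ≤ n) (c : ℕ → ℝ) (s : ℕ → ℂ)
    (G : ℕ → Matrix (Fin n) (Fin n) ℂ)
    (hG : ∀ i, 1 ≤ i → i ≤ n - 2 → IsGivensAt i (c i) (s i) (G i)) :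
    ∀ m, m ≤ n - 2 → ∀ p q : Fin n,
      (((List.range m).map (fun j => G (1 + j))).prod) p q =
        if (q : ℕ) = 0 ∨ m + 2 ≤ (q : ℕ) then (if p = q then 1 else 0)
        else if 1 ≤ (p : ℕ) ∧ (p : ℕ) ≤ (q : ℕ) then
          auxA c (p : ℕ) * auxS s (p : ℕ) (q : ℕ) * auxB c m (q : ℕ)
        else if (p : ℕ) = (q : ℕ) + 1 ∧ (q : ℕ) ≤ m then -((starRingEnd ℂ) (s (q : ℕ)))
        else 0 := by
  intro m
  induction m with
  | zero =>
    intro _ p q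
    simp only [List.range_zero, List.map_nil, List.prod_nil]
    rw [Matrix.one_apply]
    by_cases h0 : (q : ℕ) = 0 ∨ 0 + 2 ≤ (q : ℕ)
    · rw [if_pos h0]
    · have hq1 : (q : ℕ) = 1 := by omega
      rw [if_neg h0]
      by_cases hp : 1 ≤ (p : ℕ) ∧ (p : ℕ) ≤ (q : ℕ)
      · have hpq : p = q := Fin.ext (by omega)
        rw [if_pos hp, if_pos hpq]
        have hpv : (p : ℕ) = 1 := by omega
        simp [auxA, auxB, auxS, hpv, hq1]
      · have hpq : p ≠ q := by
          intro h; exact hp (by rw [h, hq1]; omega)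
        rw [if_neg hp, if_neg hpq, if_neg (by omega : ¬((p:ℕ) = (q:ℕ)+1 ∧ (q:ℕ) ≤ 0))]
  | succ m ih =>
    intro hm p q
    have hm' : m ≤ n - 2 := by omega
    have ih' := ih hm'
    obtain ⟨hlt, -, hGf⟩ := hG (m+1) (by omega) hm
    have h1m : 1 + m = m + 1 := Nat.add_comm 1 m
    have hprod : ((List.range (m+1)).map (fun j => G (1 + j))).prod
        = (((List.range m).map (fun j => G (1 + j))).prod) * G (m+1) := by
      rw [List.range_succ, List.map_append, List.prod_append, List.map_singleton,
        List.prod_singleton, h1m]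
    rw [hprod, Matrix.mul_apply]
    set P := ((List.range m).map (fun j => G (1 + j))).prod with hP
    set j1 : Fin n := ⟨m + 1, by omega⟩ with hj1
    set j2 : Fin n := ⟨m + 2, by omega⟩ with hj2
    have hj1v : (j1 : ℕ) = m + 1 := rfl
    have hj2v : (j2 : ℕ) = m + 2 := rfl
    by_cases hq1 : (q : ℕ) = m + 1
    · -- column m+1
      have hGcol : ∀ j : Fin n, G (m+1) j q =
          (if j = j1 then ((c (m+1) : ℂ)) else 0)
          + (if j = j2 then -((starRingEnd ℂ) (s (m+1))) else 0) := by
        intro j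
        rw [hGf j q]
        simp only [Fin.ext_iff, hj1v, hj2v, hq1, and_true]
        split_ifs <;> first | (exfalso; omega) | ring
      have hsum : (∑ j, P p j * G (m+1) j q)
          = P p j1 * (c (m+1) : ℂ) + P p j2 * (-((starRingEnd ℂ) (s (m+1)))) := by
        simp only [hGcol, mul_add, mul_ite, mul_zero, Finset.sum_add_distrib,
          Finset.sum_ite_eq', Finset.mem_univ, if_true]
      rw [hsum, ih' p j1, ih' p j2]
      simp only [hj1v, hj2v, hq1]
      have e1 : ¬((m+1 : ℕ) = 0 ∨ m + 2 ≤ m + 1) := by omega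
      have e2 : ((m+2 : ℕ) = 0 ∨ m + 2 ≤ m + 2) := by omega
      have e3 : ¬((m+1 : ℕ) = 0 ∨ m + 1 + 2 ≤ m + 1) := by omega
      rw [if_neg e1, if_pos e2, if_neg e3]
      have hbb1 : auxB c m (m+1) = 1 := by simp [auxB]
      have hbb2 : auxB c (m+1) (m+1) = (c (m+1) : ℂ) := by simp [auxB]
      rw [hbb1, hbb2]
      by_cases hple : 1 ≤ (p : ℕ) ∧ (p : ℕ) ≤ m + 1
      · rw [if_pos hple, if_pos hple]
        have hpj2 : p ≠ j2 := by
          intro h; rw [Fin.ext_iff, hj2v] at h; omega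
        rw [if_neg hpj2]
        ring
      · rw [if_neg hple, if_neg hple]
        by_cases hpe : (p : ℕ) = m + 2
        · have hpj2 : p = j2 := Fin.ext (by rw [hj2v]; exact hpe)
          rw [if_pos hpj2, if_pos (by omega : (p:ℕ) = m + 1 + 1 ∧ m + 1 ≤ m + 1),
            if_neg (by omega : ¬((p:ℕ) = m + 1 + 1 ∧ m + 1 ≤ m))]
          ring
        · have hpj2 : p ≠ j2 := by
            intro h; rw [Fin.ext_iff, hj2v] at h; exact hpe h
          rw [if_neg hpj2, if_neg (by omega : ¬((p:ℕ) = m + 1 + 1 ∧ m + 1 ≤ m)),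
            if_neg (by omega : ¬((p:ℕ) = m + 1 + 1 ∧ m + 1 ≤ m + 1))]
          ring
    · by_cases hq2 : (q : ℕ) = m + 2
      · -- column m+2
        have hGcol : ∀ j : Fin n, G (m+1) j q =
            (if j = j1 then (s (m+1)) else 0)
            + (if j = j2 then ((c (m+1) : ℂ)) else 0) := by
          intro j
          rw [hGf j q]
          simp only [Fin.ext_iff, hj1v, hj2v, hq2, and_true]
          split_ifs <;> first | (exfalso; omega) | ring
        have hsum : (∑ j, P p j * G (m+1) j q)
            = P p j1 * (s (m+1)) + P p j2 * ((c (m+1) : ℂ)) := by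
          simp only [hGcol, mul_add, mul_ite, mul_zero, Finset.sum_add_distrib,
            Finset.sum_ite_eq', Finset.mem_univ, if_true]
        rw [hsum, ih' p j1, ih' p j2]
        simp only [hj1v, hj2v, hq2]
        have e1 : ¬((m+1 : ℕ) = 0 ∨ m + 2 ≤ m + 1) := by omega
        have e2 : ((m+2 : ℕ) = 0 ∨ m + 2 ≤ m + 2) := by omega
        have e3 : ¬((m+2 : ℕ) = 0 ∨ m + 1 + 2 ≤ m + 2) := by omega
        rw [if_neg e1, if_pos e2, if_neg e3]
        have hbb1 : auxB c m (m+1) = 1 := by simp [auxB]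
        have hbb2 : auxB c (m+1) (m+2) = 1 := by simp [auxB]
        rw [hbb1, hbb2]
        by_cases hple : 1 ≤ (p : ℕ) ∧ (p : ℕ) ≤ m + 1
        · rw [if_pos hple, if_pos (by omega : 1 ≤ (p:ℕ) ∧ (p:ℕ) ≤ m + 2)]
          have hpj2 : p ≠ j2 := by
            intro h; rw [Fin.ext_iff, hj2v] at h; omega
          rw [if_neg hpj2]
          have hsig : auxS s (p : ℕ) (m+2) = auxS s (p : ℕ) (m+1) * s (m+1) := by
            unfold auxS
            rw [Finset.prod_Ico_succ_top (by omega : (p:ℕ) ≤ m + 1)]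
          rw [hsig]; ring
        · rw [if_neg hple]
          by_cases hpe : (p : ℕ) = m + 2
          · have hpj2 : p = j2 := Fin.ext (by rw [hj2v]; exact hpe)
            rw [if_pos hpj2, if_neg (by omega : ¬((p:ℕ) = m + 1 + 1 ∧ m + 1 ≤ m)),
              if_pos (by omega : 1 ≤ (p:ℕ) ∧ (p:ℕ) ≤ m + 2)]
            have hsig : auxS s (p : ℕ) (m+2) = 1 := by
              unfold auxS; rw [hpe]; simp
            have haa : auxA c (p : ℕ) = (c (m+1) : ℂ) := by
              unfold auxA; rw [hpe]; simp
            rw [hsig, haa]; ring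
          · have hpj2 : p ≠ j2 := by
              intro h; rw [Fin.ext_iff, hj2v] at h; exact hpe h
            rw [if_neg hpj2, if_neg (by omega : ¬((p:ℕ) = m + 1 + 1 ∧ m + 1 ≤ m)),
              if_neg (by omega : ¬(1 ≤ (p:ℕ) ∧ (p:ℕ) ≤ m + 2)),
              if_neg (by omega : ¬((p:ℕ) = m + 2 + 1 ∧ m + 2 ≤ m + 1))]
            ring
      · -- generic column
        have hsum : (∑ j, P p j * G (m+1) j q) = P p q := by
          rw [Finset.sum_eq_single q]
          · have : G (m+1) q q = 1 := by
              rw [hGf q q]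
              rw [if_neg (by omega : ¬((q:ℕ) = m+1 ∧ (q:ℕ) = m+1)),
                if_neg (by omega : ¬((q:ℕ) = m+1 ∧ (q:ℕ) = m+1+1)),
                if_neg (by omega : ¬((q:ℕ) = m+1+1 ∧ (q:ℕ) = m+1)),
                if_neg (by omega : ¬((q:ℕ) = m+1+1 ∧ (q:ℕ) = m+1+1)),
                if_pos rfl]
            rw [this, mul_one]
          · intro j _ hjq
            have : G (m+1) j q = 0 := by
              rw [hGf j q]
              rw [if_neg (by omega : ¬((j:ℕ) = m+1 ∧ (q:ℕ) = m+1)),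
                if_neg (by omega : ¬((j:ℕ) = m+1 ∧ (q:ℕ) = m+1+1)),
                if_neg (by omega : ¬((j:ℕ) = m+1+1 ∧ (q:ℕ) = m+1)),
                if_neg (by omega : ¬((j:ℕ) = m+1+1 ∧ (q:ℕ) = m+1+1)),
                if_neg hjq]
            rw [this, mul_zero]
          · intro h; exact absurd (Finset.mem_univ q) h
        rw [hsum, ih' p q]
        have hbb : auxB c m (q : ℕ) = auxB c (m+1) (q : ℕ) := by
          unfold auxB; split_ifs <;> first | rfl | omega
        have hc1 : ((q:ℕ) = 0 ∨ m + 2 ≤ (q:ℕ)) ↔ ((q:ℕ) = 0 ∨ m + 1 + 2 ≤ (q:ℕ)) := by omega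
        have hc2 : ((p:ℕ) = (q:ℕ) + 1 ∧ (q:ℕ) ≤ m) ↔ ((p:ℕ) = (q:ℕ) + 1 ∧ (q:ℕ) ≤ m + 1) := by
          omega
        simp only [hbb, hc1, hc2]

lemma matrix_rank_add_le {m n : Type*} [Fintype m] [Fintype n] (X Y : Matrix m n ℂ) :
    (X + Y).rank ≤ X.rank + Y.rank := by
  classical
  have h : (X + Y).mulVecLin = X.mulVecLin + Y.mulVecLin := by
    simp [Matrix.mulVecLin_add]
  have hle : LinearMap.range (X + Y).mulVecLin ≤
      LinearMap.range X.mulVecLin ⊔ LinearMap.range Y.mulVecLin := by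
    rw [h]
    rintro z ⟨x, rfl⟩
    exact Submodule.mem_sup.mpr ⟨X.mulVecLin x, ⟨x, rfl⟩, Y.mulVecLin x, ⟨x, rfl⟩, rfl⟩
  calc (X + Y).rank
      ≤ Module.finrank ℂ ↥(LinearMap.range X.mulVecLin ⊔ LinearMap.range Y.mulVecLin) :=
        Submodule.finrank_mono hle
    _ ≤ X.rank + Y.rank := Submodule.finrank_add_le_finrank_add_finrank _ _


set_option maxHeartbeats 2000000 in
/-- Second part of Theorem 3.3 of the paper (0-indexed): the trailing
principal submatrix `Â₁ = (Q₁AQ₁ᴴ)[2:n, 2:n]` of size `n-1` is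
lower-quasiseparable of rank `k`. -/
theorem stmt_17 (n k : ℕ) (hn : 3 ≤ n)
    (dd : Fin n → ℝ) (U V : Matrix (Fin n) (Fin k) ℂ)
    (A : Matrix (Fin n) (Fin n) ℂ)
    (hA : A = Matrix.diagonal (fun i => (dd i : ℂ)) + U * Vᴴ)
    (hcol : ∃ i : Fin n, 2 ≤ (i : ℕ) ∧ A i ⟨0, by omega⟩ ≠ 0)
    (c : ℕ → ℝ) (s : ℕ → ℂ) (G : ℕ → Matrix (Fin n) (Fin n) ℂ)
    (hG : ∀ i, 1 ≤ i → i ≤ n - 2 → IsGivensAt i (c i) (s i) (G i))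
    (Q₁ : Matrix (Fin n) (Fin n) ℂ)
    (hQ₁ : Q₁ = ((List.range (n - 2)).map (fun j => G (1 + j))).prod)
    (α β : ℂ)
    (hQA : ∀ p : Fin n, (Q₁ * A) p ⟨0, by omega⟩ =
      if (p : ℕ) = 0 then α else if (p : ℕ) = 1 then β else 0) :
    lowQS k (Matrix.of fun (p q : Fin (n - 1)) =>
      (Q₁ * A * Q₁ᴴ) ⟨(p : ℕ) + 1, by have := p.2; omega⟩
                     ⟨(q : ℕ) + 1, by have := q.2; omega⟩) := by
  classical
  have hQform := givens_prod_entry n hn c s G hG (n-2) le_rfl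
  rw [← hQ₁] at hQform
  -- basic structure facts about Q₁
  have hQcol0 : ∀ p : Fin n, 1 ≤ (p : ℕ) → Q₁ p ⟨0, by omega⟩ = 0 := by
    intro p hp
    rw [hQform p ⟨0, by omega⟩]
    rw [if_pos (Or.inl rfl), if_neg (by intro h; rw [Fin.ext_iff] at h; simp at h; omega)]
  have hHess : ∀ p q : Fin n, (q : ℕ) + 2 ≤ (p : ℕ) → Q₁ p q = 0 := by
    intro p q hpq
    rw [hQform p q]
    by_cases h0 : (q : ℕ) = 0 ∨ (n-2) + 2 ≤ (q : ℕ)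
    · rw [if_pos h0, if_neg (by intro h; rw [Fin.ext_iff] at h; omega)]
    · rw [if_neg h0, if_neg (by omega : ¬(1 ≤ (p:ℕ) ∧ (p:ℕ) ≤ (q:ℕ))),
        if_neg (by omega : ¬((p:ℕ) = (q:ℕ) + 1 ∧ (q:ℕ) ≤ n - 2))]
  have hUp : ∀ p q : Fin n, 1 ≤ (p : ℕ) → (p : ℕ) ≤ (q : ℕ) →
      Q₁ p q = auxA c (p : ℕ) * auxS s (p : ℕ) (q : ℕ) * auxB c (n-2) (q : ℕ) := by
    intro p q hp hpq
    rw [hQform p q]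
    have hq : ¬((q : ℕ) = 0 ∨ (n-2) + 2 ≤ (q : ℕ)) := by
      have := q.2; omega
    rw [if_neg hq, if_pos ⟨hp, hpq⟩]
  intro i hi him
  -- index embeddings
  have hin : i < n - 1 := him
  set z0 : Fin n := ⟨0, by omega⟩ with hz0
  set dc : Fin n → ℂ := fun j => (dd j : ℂ) with hdc
  -- the generators
  set uu : ℕ → ℂ := fun cc => auxA c cc * auxS s cc i with huu
  set vv : ℕ → ℂ := fun j => auxS s i j * auxB c (n-2) j with hvv
  set r : Fin (n - 1 - i) → Fin n := fun p => ⟨i + p.1 + 1, by have := p.2; omega⟩ with hr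
  set cl : Fin i → Fin n := fun q => ⟨q.1 + 1, by have := q.2; omega⟩ with hcl
  set T : Matrix (Fin (n - 1 - i)) (Fin 1) ℂ :=
    Matrix.of fun p _ => ∑ j, Q₁ (r p) j * dc j * star (vv (j : ℕ)) with hT
  set R : Matrix (Fin 1) (Fin i) ℂ := Matrix.of fun _ q => star (uu ((q : ℕ) + 1)) with hR
  set P₁ : Matrix (Fin (n - 1 - i)) (Fin k) ℂ :=
    Matrix.of fun p x => (Q₁ * U) (r p) x with hP₁
  set P₂ : Matrix (Fin k) (Fin i) ℂ :=
    Matrix.of fun x q => star ((Q₁ * V) (cl q) x) with hP₂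
  have hsplit : Q₁ * A * Q₁ᴴ = Q₁ * (Matrix.diagonal dc) * Q₁ᴴ + (Q₁ * U) * (Q₁ * V)ᴴ := by
    rw [hA]
    simp only [Matrix.conjTranspose_mul, Matrix.mul_add, Matrix.add_mul, Matrix.mul_assoc]
  have key : (Matrix.of fun (p : Fin (n - 1 - i)) (q : Fin i) =>
      (Q₁ * A * Q₁ᴴ) (r p) (cl q)) = T * R + P₁ * P₂ := by
    ext p q
    simp only [Matrix.of_apply, Matrix.add_apply]
    rw [hsplit, Matrix.add_apply]
    have e1 : (Q₁ * Matrix.diagonal dc * Q₁ᴴ) (r p) (cl q) = (T * R) p q := by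
      have hTR : (T * R) p q = (∑ j, Q₁ (r p) j * dc j * star (vv (j : ℕ)))
          * star (uu ((q : ℕ) + 1)) := by
        rw [Matrix.mul_apply, Fin.sum_univ_one]
        rfl
      rw [Matrix.mul_apply, hTR, Finset.sum_mul]
      apply Finset.sum_congr rfl
      intro j _
      rw [Matrix.mul_diagonal, Matrix.conjTranspose_apply]
      by_cases hj : (j : ℕ) < i
      · have h1 : Q₁ (r p) j = 0 := by
          apply hHess
          show (j : ℕ) + 2 ≤ i + p.1 + 1
          omega
        rw [h1]; ring
      · push_neg at hj
        have hq1 : (cl q : ℕ) = (q : ℕ) + 1 := rfl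
        have h2 : Q₁ (cl q) j
            = auxA c ((q : ℕ) + 1) * auxS s ((q : ℕ) + 1) (j : ℕ) * auxB c (n-2) (j : ℕ) := by
          rw [hUp (cl q) j (by rw [hq1]; omega) (by rw [hq1]; have := q.2; omega), hq1]
        have h3 : auxS s ((q : ℕ) + 1) (j : ℕ)
            = auxS s ((q : ℕ) + 1) i * auxS s i (j : ℕ) := by
          unfold auxS
          rw [← Finset.prod_Ico_consecutive s (by have := q.2; omega : (q:ℕ)+1 ≤ i) hj]
        rw [h2, h3, huu, hvv]
        simp only [star_mul']
        ring
    have e2 : (Q₁ * U * (Q₁ * V)ᴴ) (r p) (cl q) = (P₁ * P₂) p q := by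
      rw [Matrix.mul_apply, Matrix.mul_apply]
      apply Finset.sum_congr rfl
      intro x _
      rw [Matrix.conjTranspose_apply]
      rfl
    rw [e1, e2]
  show (Matrix.of fun (p : Fin (n - 1 - i)) (q : Fin i) =>
      (Q₁ * A * Q₁ᴴ) (r p) (cl q)).rank ≤ k
  rw [key]
  -- w, kernel vector
  set w : Fin k → ℂ := fun x => star (V z0 x) with hw
  obtain ⟨i₀, hi₀2, hi₀ne⟩ := hcol
  have hAi₀ : A i₀ z0 = ∑ x, U i₀ x * w x := by
    rw [hA]
    simp only [Matrix.add_apply, Matrix.diagonal_apply_ne _ (by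
      intro h; rw [Fin.ext_iff] at h; simp [hz0] at h; omega : i₀ ≠ z0)]
    rw [Matrix.mul_apply]
    simp [Matrix.conjTranspose_apply, hw]
  have hwne : w ≠ 0 := by
    intro h
    apply hi₀ne
    rw [hAi₀, h]
    simp
  have hk1 : 1 ≤ k := by
    by_contra h
    apply hwne
    funext x
    exact absurd x.isLt (by omega)
  have hPw : P₁ *ᵥ w = 0 := by
    funext p
    have hrpv : ((r p) : ℕ) = i + p.1 + 1 := rfl
    show ∑ x, P₁ p x * w x = 0
    have h1 : ∀ jj : Fin n, (∑ x, U jj x * w x) = (U * Vᴴ) jj z0 := by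
      intro jj
      rw [Matrix.mul_apply]
      simp [Matrix.conjTranspose_apply, hw]
    have h2 : ∑ x, P₁ p x * w x = ∑ jj, Q₁ (r p) jj * ((U * Vᴴ) jj z0) := by
      calc ∑ x, P₁ p x * w x
          = ∑ x, ∑ jj, Q₁ (r p) jj * U jj x * w x := by
            apply Finset.sum_congr rfl
            intro x _
            show (Q₁ * U) (r p) x * w x = _
            rw [Matrix.mul_apply, Finset.sum_mul]
        _ = ∑ jj, ∑ x, Q₁ (r p) jj * U jj x * w x := Finset.sum_comm
        _ = ∑ jj, Q₁ (r p) jj * ((U * Vᴴ) jj z0) := by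
            apply Finset.sum_congr rfl
            intro jj _
            rw [← h1 jj, Finset.mul_sum]
            exact Finset.sum_congr rfl fun x _ => by ring
    have h3 : ∀ jj : Fin n, (U * Vᴴ) jj z0 = A jj z0 - Matrix.diagonal dc jj z0 := by
      intro jj
      rw [hA]
      simp only [Matrix.add_apply]
      ring
    have h4 : ∑ jj, Q₁ (r p) jj * ((U * Vᴴ) jj z0)
        = (Q₁ * A) (r p) z0 - ∑ jj, Q₁ (r p) jj * Matrix.diagonal dc jj z0 := by
      rw [Matrix.mul_apply, ← Finset.sum_sub_distrib]
      apply Finset.sum_congr rfl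
      intro jj _
      rw [h3]
      ring
    have h5 : ∑ jj, Q₁ (r p) jj * Matrix.diagonal dc jj z0 = 0 := by
      apply Finset.sum_eq_zero
      intro jj _
      by_cases hjj : jj = z0
      · subst hjj
        rw [hQcol0 (r p) (by rw [hrpv]; omega)]
        ring
      · rw [Matrix.diagonal_apply_ne _ hjj, mul_zero]
    rw [h2, h4, h5, hQA (r p)]
    rw [if_neg (by rw [hrpv]; omega), if_neg (by rw [hrpv]; omega)]
    ring
  have hrank1 : (T * R).rank ≤ 1 := by
    calc (T * R).rank ≤ T.rank := Matrix.rank_mul_le_left T R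
      _ ≤ Fintype.card (Fin 1) := Matrix.rank_le_card_width T
      _ = 1 := by simp
  have hrankP : P₁.rank ≤ k - 1 := by
    have hker : w ∈ LinearMap.ker P₁.mulVecLin := by
      rw [LinearMap.mem_ker, Matrix.mulVecLin_apply]
      exact hPw
    have hpos : 0 < Module.finrank ℂ (LinearMap.ker P₁.mulVecLin) := by
      rw [Module.finrank_pos_iff_exists_ne_zero]
      refine ⟨⟨w, hker⟩, ?_⟩
      intro h
      exact hwne (by simpa using congrArg Subtype.val h)
    have hrn := LinearMap.finrank_range_add_finrank_ker P₁.mulVecLin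
    have hfr : Module.finrank ℂ (Fin k → ℂ) = k := by simp
    rw [hfr] at hrn
    have hrd : P₁.rank = Module.finrank ℂ (LinearMap.range P₁.mulVecLin) := rfl
    omega
  have hrank2 : (P₁ * P₂).rank ≤ k - 1 :=
    (Matrix.rank_mul_le_left P₁ P₂).trans hrankP
  calc (T * R + P₁ * P₂).rank
      ≤ (T * R).rank + (P₁ * P₂).rank := matrix_rank_add_le _ _
    _ ≤ 1 + (k - 1) := add_le_add hrank1 hrank2
    _ = k := by omega
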